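/- Let G be a multiset of vectors in F_2^k and R a multiset of nonzero vectors in F_2^k (requests). If R can be served from G by pairwise disjoint recovery sets (each recovery set a sub-multiset of G whose elements sum to the corresponding request), then 2|R| ≤ |G| − N_G(0) + |G ∩ R|, where N_G(0) is the multiplicity of the zero vector in G and |G ∩ R| = Σ_e min(N_G(e), N_R(e)). -/

import Mathlib

/-- if a sequence `R` of `v` nonzero requests can be served from the
multiset `G` by pairwise disjoint recovery sets, then
`2|R| ≤ |G| − N_G(0) + |G ∩ R|`, stated additively to avoid truncated
subtraction: `2·v + N_G(0) ≤ |G| + |G ∩ R|`. -/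
private lemma card_finset_sum {ι β : Type*} (s : Finset ι) (f : ι → Multiset β) :
    Multiset.card (∑ i ∈ s, f i) = ∑ i ∈ s, Multiset.card (f i) := by
  classical
  induction s using Finset.induction with
  | empty => simp
  | insert _ _ h ih => simp [Finset.sum_insert h, ih]

theorem serve_count_upper_bound (k v : ℕ) (G : Multiset (Fin k → ZMod 2))
    (R : Fin v → (Fin k → ZMod 2)) (hR : ∀ i, R i ≠ 0)
    (hserve : ∃ S : Fin v → Multiset (Fin k → ZMod 2),
      (∑ i, S i) ≤ G ∧ ∀ i, (S i).sum = R i) :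
    2 * v + G.count 0 ≤
      Multiset.card G + Multiset.card (G ∩ (↑(List.ofFn R) : Multiset (Fin k → ZMod 2))) := by
  obtain ⟨S, hSle, hSsum⟩ := hserve
  classical
  set p : (Fin k → ZMod 2) → Prop := fun x => x ≠ 0 with hp
  set T : Fin v → Multiset (Fin k → ZMod 2) := fun i => (S i).filter p with hT
  -- sums are preserved after removing zeros
  have hTsum : ∀ i, (T i).sum = R i := by
    intro i
    have h1 : (S i).filter p + (S i).filter (fun x => ¬ p x) = S i :=
      Multiset.filter_add_not p (S i)
    have h2 : ((S i).filter (fun x => ¬ p x)).sum = 0 := by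
      apply Multiset.sum_eq_zero
      intro x hx
      have := (Multiset.mem_filter.mp hx).2
      simpa [hp] using this
    have := congrArg Multiset.sum h1
    rw [Multiset.sum_add, h2, add_zero] at this
    rw [hT]; rw [this, hSsum i]
  -- filter distributes over the finite sum
  have hfilter_sum : ∑ i, T i = (∑ i, S i).filter p := by
    rw [hT]
    induction (Finset.univ : Finset (Fin v)) using Finset.induction with
    | empty => simp
    | insert _ _ h ih => simp [Finset.sum_insert h, Multiset.filter_add, ih]
  have hTle : ∑ i, T i ≤ G.filter p := by
    rw [hfilter_sum]; exact Multiset.filter_le_filter p hSle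
  -- cardinality bookkeeping for zeros
  have hcardG : Multiset.card (G.filter p) + G.count 0 = Multiset.card G := by
    have h1 : G.filter p + G.filter (fun x => ¬ p x) = G := Multiset.filter_add_not p G
    have h2 : G.filter (fun x => ¬ p x) = G.filter (fun x => 0 = x) := by
      apply Multiset.filter_congr
      intro x _
      constructor
      · intro hx; simp [hp] at hx; exact hx.symm
      · intro hx; simp [hp, hx.symm]
    have := congrArg Multiset.card h1
    rw [Multiset.card_add] at this
    rw [h2] at this
    rw [Multiset.count, Multiset.countP_eq_card_filter]
    exact this
  -- T i is nonempty
  have hTne : ∀ i, T i ≠ 0 := by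
    intro i h
    apply hR i
    rw [← hTsum i, h, Multiset.sum_zero]
  set A : Finset (Fin v) := Finset.univ.filter (fun i => Multiset.card (T i) = 1) with hA
  -- singletons are exactly {R i}
  have hsingle : ∀ i ∈ A, T i = {R i} := by
    intro i hi
    rw [hA, Finset.mem_filter] at hi
    obtain ⟨a, ha⟩ := Multiset.card_eq_one.mp hi.2
    have : (T i).sum = a := by rw [ha]; simp
    rw [ha, ← hTsum i, this]
  -- card A ≤ card (G ∩ R)
  have hM : ∑ i ∈ A, ({R i} : Multiset (Fin k → ZMod 2)) ≤ G ∩ ↑(List.ofFn R) := by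
    apply le_inf
    · calc ∑ i ∈ A, ({R i} : Multiset (Fin k → ZMod 2)) = ∑ i ∈ A, T i := by
            apply Finset.sum_congr rfl
            intro i hi; exact (hsingle i hi).symm
        _ ≤ ∑ i, T i := Finset.sum_le_sum_of_subset (Finset.subset_univ A)
        _ ≤ G.filter p := hTle
        _ ≤ G := Multiset.filter_le p G
    · calc ∑ i ∈ A, ({R i} : Multiset (Fin k → ZMod 2))
          ≤ ∑ i, ({R i} : Multiset (Fin k → ZMod 2)) :=
            Finset.sum_le_sum_of_subset (Finset.subset_univ A)
        _ = ↑(List.ofFn R) := by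
            rw [Finset.sum_eq_multiset_sum]
            rw [show (fun i => ({R i} : Multiset (Fin k → ZMod 2)))
              = (fun a => ({a} : Multiset (Fin k → ZMod 2))) ∘ R from rfl]
            rw [← Fin.univ_val_map R, ← Multiset.map_map, Multiset.sum_map_singleton]
  have hcardA : A.card ≤ Multiset.card (G ∩ ↑(List.ofFn R)) := by
    have := Multiset.card_le_card hM
    rwa [card_finset_sum, Finset.sum_congr rfl
      (fun i _ => Multiset.card_singleton (R i)), Finset.sum_const, smul_eq_mul, mul_one] at this
  -- main counting
  have hN : ∑ i, Multiset.card (T i) + G.count 0 ≤ Multiset.card G := by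
    rw [← hcardG]
    have := Multiset.card_le_card hTle
    rw [card_finset_sum] at this
    omega
  have h2v : 2 * v ≤ ∑ i, Multiset.card (T i) + A.card := by
    have hsplit : ∑ i, Multiset.card (T i) = ∑ i ∈ A, Multiset.card (T i)
        + ∑ i ∈ Aᶜ, Multiset.card (T i) := (Finset.sum_add_sum_compl A _).symm
    have h1 : ∑ i ∈ A, Multiset.card (T i) = A.card := by
      rw [Finset.sum_congr rfl (fun i hi => by rw [hsingle i hi, Multiset.card_singleton])]
      simp
    have h2 : 2 * Aᶜ.card ≤ ∑ i ∈ Aᶜ, Multiset.card (T i) := by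
      calc 2 * Aᶜ.card = ∑ _i ∈ Aᶜ, 2 := by rw [Finset.sum_const, smul_eq_mul, mul_comm]
        _ ≤ ∑ i ∈ Aᶜ, Multiset.card (T i) := by
            apply Finset.sum_le_sum
            intro i hi
            rw [hA] at hi
            simp only [Finset.mem_compl, Finset.mem_filter, Finset.mem_univ, true_and] at hi
            have hne : Multiset.card (T i) ≠ 0 := by
              simpa [Multiset.card_eq_zero] using hTne i
            omega
    have hcards : A.card + Aᶜ.card = v := by
      rw [Finset.card_add_card_compl]; simp
    omega
  omega
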